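/- For α ∈ (0,1), λ ∈ ℝ, and y0 ∈ ℝ, the function y(t) = E_α(λ t^α) y0, where E_α(z) = Σ_{k=0}^∞ z^k / Γ(αk + 1) is the Mittag-Leffler function, satisfies the Volterra integral equation y(t) = y0 + (λ/Γ(α)) ∫_0^t (t−s)^{α−1} y(s) ds for all t ≥ 0. -/

import Mathlib

open Real intervalIntegral

section helpers
open MeasureTheory

lemma beta_real {p q t : ℝ} (hp : 0 < p) (hq : 0 < q) (ht : 0 < t) :
    ∫ s in (0:ℝ)..t, s ^ (p-1) * (t - s) ^ (q-1)
      = t ^ (p+q-1) * (Real.Gamma p * Real.Gamma q / Real.Gamma (p+q)) := by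
  have hpq : (0:ℝ) < p + q := by linarith
  have hC : ∫ x in (0:ℝ)..t, (x:ℂ) ^ ((p:ℂ) - 1) * ((t:ℂ) - x) ^ ((q:ℂ) - 1)
      = (t:ℂ) ^ ((p:ℂ) + q - 1) * Complex.betaIntegral p q :=
    Complex.betaIntegral_scaled p q ht
  have hG : Complex.Gamma p * Complex.Gamma q
      = Complex.Gamma ((p:ℂ) + q) * Complex.betaIntegral p q := by
    simpa using Complex.Gamma_mul_Gamma_eq_betaIntegral
      (by simpa using hp) (by simpa using hq)
  have hGne : Complex.Gamma ((p:ℂ) + q) ≠ 0 := by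
    rw [show ((p:ℂ) + q) = ((p + q : ℝ) : ℂ) by push_cast; ring, Complex.Gamma_ofReal]
    exact_mod_cast (Real.Gamma_pos_of_pos hpq).ne'
  have hL : ∫ x in (0:ℝ)..t, (x:ℂ) ^ ((p:ℂ) - 1) * ((t:ℂ) - x) ^ ((q:ℂ) - 1)
      = ((∫ s in (0:ℝ)..t, s ^ (p-1) * (t - s) ^ (q-1) : ℝ) : ℂ) := by
    rw [← intervalIntegral.integral_ofReal]
    refine intervalIntegral.integral_congr fun x hx => ?_
    rw [Set.uIcc_of_le ht.le] at hx
    rw [Complex.ofReal_mul, Complex.ofReal_cpow hx.1,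
      Complex.ofReal_cpow (by linarith [hx.2] : (0:ℝ) ≤ t - x)]
    push_cast
    rfl
  have hbeta : Complex.betaIntegral p q
      = Complex.Gamma p * Complex.Gamma q / Complex.Gamma ((p:ℂ)+q) := by
    rw [eq_div_iff hGne]; linear_combination -hG
  have key : ((∫ s in (0:ℝ)..t, s ^ (p-1) * (t - s) ^ (q-1) : ℝ) : ℂ)
      = ((t ^ (p+q-1) * (Real.Gamma p * Real.Gamma q / Real.Gamma (p+q)) : ℝ) : ℂ) := by
    rw [← hL, hC, hbeta]
    rw [Complex.ofReal_mul, Complex.ofReal_cpow ht.le,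
      show ((p:ℂ) + q) = ((p + q : ℝ) : ℂ) by push_cast; ring,
      Complex.Gamma_ofReal, Complex.Gamma_ofReal, Complex.Gamma_ofReal]
    push_cast
    rfl
  exact_mod_cast key

lemma factorial_le_Gamma {y : ℝ} (hy : 1 ≤ y) :
    (Nat.factorial (Nat.floor y) : ℝ) ≤ Real.Gamma (y + 1) := by
  set m : ℕ := Nat.floor y with hm
  have hy0 : (0:ℝ) < y := by linarith
  have hm1 : 1 ≤ m := Nat.le_floor (by exact_mod_cast hy)
  have hmy : (m : ℝ) ≤ y := Nat.floor_le hy0.le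
  have hm0 : (0:ℝ) < m := by exact_mod_cast hm1
  set θ : ℝ := m / y with hθ
  have hθ0 : 0 < θ := div_pos hm0 hy0
  have hθ1 : θ ≤ 1 := div_le_one_of_le₀ hmy hy0.le
  have hconv := Real.convexOn_log_Gamma.2 (Set.mem_Ioi.2 (by linarith : (0:ℝ) < y + 1))
    (Set.mem_Ioi.2 one_pos) hθ0.le (by linarith : (0:ℝ) ≤ 1 - θ) (by ring)
  simp only [Function.comp, smul_eq_mul, Real.Gamma_one, Real.log_one, mul_zero, add_zero] at hconv
  have harg : θ * (y + 1) + (1 - θ) * 1 = (m : ℝ) + 1 := by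
    field_simp [hθ]
    rw [hθ, mul_add, div_mul_cancel₀ _ hy0.ne']
    ring
  rw [harg] at hconv
  have hfact : Real.Gamma ((m:ℝ) + 1) = ((Nat.factorial m) : ℝ) := Real.Gamma_nat_eq_factorial m
  rw [hfact] at hconv
  -- hconv : log ((Nat.factorial m)) ≤ θ * log (Gamma (y+1))
  have hlogfact : (0:ℝ) ≤ Real.log ((Nat.factorial m)) := by
    apply Real.log_nonneg
    exact_mod_cast Nat.one_le_iff_ne_zero.mpr (Nat.factorial_ne_zero _)
  have hlogG : 0 ≤ Real.log (Real.Gamma (y + 1)) := nonneg_of_mul_nonneg_right (le_trans hlogfact hconv) hθ0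
  have h2 : Real.log ((Nat.factorial m)) ≤ Real.log (Real.Gamma (y + 1)) := by
    calc Real.log ((Nat.factorial m)) ≤ θ * Real.log (Real.Gamma (y+1)) := hconv
    _ ≤ 1 * Real.log (Real.Gamma (y+1)) := by nlinarith
    _ = _ := one_mul _
  have hGpos : 0 < Real.Gamma (y + 1) := Real.Gamma_pos_of_pos (by linarith)
  have hfpos : (0:ℝ) < ((Nat.factorial m) : ℝ) := by exact_mod_cast Nat.factorial_pos m
  exact (Real.log_le_log_iff hfpos hGpos).1 h2

lemma rpow_le_Gamma {X y : ℝ} (hX : 1 ≤ X) (hy : 1 ≤ y) :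
    X ^ y / (X * Real.exp X) ≤ Real.Gamma (y + 1) := by
  have hX0 : (0:ℝ) < X := by linarith
  refine le_trans ?_ (factorial_le_Gamma hy)
  set m : ℕ := Nat.floor y with hm
  have h1 : X ^ (m:ℕ) / Real.exp X ≤ ((Nat.factorial m) : ℝ) := by
    rw [div_le_iff₀ (Real.exp_pos X)]
    have := Real.pow_div_factorial_le_exp X hX0.le m
    rw [div_le_iff₀ (by exact_mod_cast Nat.factorial_pos m : (0:ℝ) < ((Nat.factorial m) : ℝ))] at this
    linarith [this]
  refine le_trans ?_ h1
  rw [div_le_div_iff₀ (by positivity) (Real.exp_pos X)]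
  have h2 : X ^ y ≤ X ^ ((m:ℝ) + 1) := by
    apply Real.rpow_le_rpow_of_exponent_le hX
    exact (Nat.lt_floor_add_one y).le
  calc X ^ y * Real.exp X ≤ X ^ ((m:ℝ)+1) * Real.exp X := by nlinarith [Real.exp_pos X]
    _ = X ^ (m:ℕ) * X * Real.exp X := by
        rw [Real.rpow_add hX0, Real.rpow_one, Real.rpow_natCast]
    _ = X ^ (m:ℕ) * Real.exp X * X := by ring
    _ = X ^ (m:ℕ) * (X * Real.exp X) := by ring

lemma ml_summable {α β : ℝ} (hα : 0 < α) (hβ : 1 ≤ β) (x : ℝ) :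
    Summable fun k : ℕ => x ^ k / Real.Gamma (α * k + β) := by
  set X : ℝ := (2*|x|+2) ^ (1/α) with hXdef
  have hb : (1:ℝ) ≤ 2*|x|+2 := by linarith [abs_nonneg x]
  have hX1 : 1 ≤ X := Real.one_le_rpow hb (by positivity)
  have hX0 : (0:ℝ) < X := by linarith
  have hXα : X ^ α = 2*|x|+2 := by
    rw [hXdef, ← Real.rpow_mul (by linarith), one_div, inv_mul_cancel₀ hα.ne', Real.rpow_one]
  set C : ℝ := X * Real.exp X / X ^ (β - 1) with hCdef
  have hC0 : 0 < C := by positivity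
  apply Summable.of_norm_bounded_eventually_nat (g := fun k => C * (1/2) ^ k)
    ((summable_geometric_of_lt_one (by norm_num) (by norm_num)).mul_left C)
  rw [Filter.eventually_atTop]
  refine ⟨⌈1/α⌉₊, fun k hk => ?_⟩
  have hk' : 1/α ≤ (k:ℝ) := le_trans (Nat.le_ceil _) (by exact_mod_cast hk)
  have hαk : 1 ≤ α * k := by
    rw [div_le_iff₀ hα] at hk'; linarith
  have hy : 1 ≤ α * k + β - 1 := by linarith
  have hGpos : 0 < Real.Gamma (α * k + β) := Real.Gamma_pos_of_pos (by linarith)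
  have hG : X ^ (α * k + β - 1) / (X * Real.exp X) ≤ Real.Gamma (α * k + β) := by
    have := rpow_le_Gamma hX1 hy
    rwa [sub_add_cancel] at this
  have hsplit : X ^ (α * k + β - 1) = (X ^ α) ^ k * X ^ (β - 1) := by
    rw [show α * k + β - 1 = α * k + (β - 1) by ring, Real.rpow_add hX0,
      ← Real.rpow_natCast (X ^ α) k, ← Real.rpow_mul hX0.le]
  have hA0 : 0 < X ^ (α * k + β - 1) / (X * Real.exp X) := by positivity
  have step1 : ‖x ^ k / Real.Gamma (α * k + β)‖ ≤ |x| ^ k / (X ^ (α * k + β - 1) / (X * Real.exp X)) := by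
    rw [norm_div, norm_pow, Real.norm_eq_abs, Real.norm_eq_abs, abs_of_pos hGpos]
    exact div_le_div_of_nonneg_left (by positivity) hA0 hG
  refine le_trans step1 ?_
  rw [hsplit]
  have heq : |x| ^ k / ((X ^ α) ^ k * X ^ (β-1) / (X * Real.exp X)) = C * (|x| / X ^ α) ^ k := by
    rw [div_pow, hCdef]
    field_simp
  rw [heq]
  apply mul_le_mul_of_nonneg_left _ hC0.le
  apply pow_le_pow_left₀ (by positivity) _ k
  rw [hXα, div_le_iff₀ (by linarith), one_div_mul_eq_div]
  linarith [abs_nonneg x]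

end helpers

/-- The Mittag-Leffler function `E_α(z) = Σ z^k / Γ(αk+1)` (real version). -/
noncomputable def mittagLeffler (α x : ℝ) : ℝ :=
  ∑' k : ℕ, x ^ k / Real.Gamma (α * k + 1)

open MeasureTheory in
/-- `y(t) = E_α(λ t^α) y0` solves the Volterra integral equation associated with
the linear Caputo problem `D^α y = λ y`, `y(0) = y0`. -/
theorem mittagLeffler_solves_volterra
    (α lam y0 : ℝ) (hα : 0 < α) (hα1 : α < 1) :
    ∀ t : ℝ, 0 ≤ t →
      mittagLeffler α (lam * t ^ α) * y0
        = y0 + (lam / Real.Gamma α) *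
            ∫ s in (0:ℝ)..t, (t - s) ^ (α - 1) * (mittagLeffler α (lam * s ^ α) * y0) := by
  intro t ht
  have hGα : Real.Gamma α ≠ 0 := (Real.Gamma_pos_of_pos hα).ne'
  rcases ht.eq_or_lt with rfl | htpos
  · -- t = 0
    rw [intervalIntegral.integral_same, mul_zero, add_zero]
    rw [Real.zero_rpow hα.ne', mul_zero]
    have : mittagLeffler α 0 = 1 := by
      rw [mittagLeffler, tsum_eq_single 0 (fun k hk => by
        rw [zero_pow hk, zero_div])]
      norm_num [Real.Gamma_one]
    rw [this, one_mul]
  -- t > 0 from now on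
  set F : ℕ → ℝ → ℝ :=
    fun k s => (t - s) ^ (α - 1) * ((lam * s ^ α) ^ k / Real.Gamma (α * k + 1) * y0) with hF
  have hrp : ∀ s : ℝ, 0 ≤ s → ∀ k : ℕ, (s ^ α) ^ k = s ^ (α * k) := by
    intro s hs k
    rw [← Real.rpow_natCast (s ^ α) k, ← Real.rpow_mul hs]
  -- pointwise expansion
  have hexp : ∀ s : ℝ, (t - s) ^ (α - 1) * (mittagLeffler α (lam * s ^ α) * y0)
      = ∑' k, F k s := by
    intro s
    rw [hF, mittagLeffler, tsum_mul_left, tsum_mul_right]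
  -- base integrability
  have hbase : ∀ k : ℕ, IntegrableOn (fun s => (t - s) ^ (α - 1) * s ^ (α * k))
      (Set.Ioc 0 t) volume := by
    intro k
    have i1 : IntervalIntegrable (fun s : ℝ => s ^ (α - 1)) volume 0 t :=
      intervalIntegrable_rpow' (by linarith)
    have i2 : IntervalIntegrable (fun s : ℝ => (t - s) ^ (α - 1)) volume 0 t := by
      simpa using (i1.comp_sub_left t).symm
    have i3 : IntegrableOn (fun s : ℝ => (t - s) ^ (α - 1)) (Set.Ioc 0 t) volume :=
      (intervalIntegrable_iff_integrableOn_Ioc_of_le htpos.le).1 i2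
    have i4 : Integrable (fun s : ℝ => s ^ (α * k) * (t - s) ^ (α - 1))
        (volume.restrict (Set.Ioc 0 t)) := by
      apply MeasureTheory.Integrable.bdd_mul (f := fun s : ℝ => s ^ (α * k))
        (g := fun s : ℝ => (t - s) ^ (α - 1)) (c := t ^ (α * k)) i3 ?_ ?_
      · exact (measurable_id'.pow_const _).aestronglyMeasurable
      · rw [ae_restrict_iff' measurableSet_Ioc]
        filter_upwards with s hs
        rw [Real.norm_eq_abs, abs_of_nonneg (Real.rpow_nonneg hs.1.le _)]
        exact Real.rpow_le_rpow hs.1.le hs.2 (by positivity)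
    exact i4.congr (Filter.Eventually.of_forall fun s => mul_comm _ _)
  -- beta evaluation
  have hbeta : ∀ k : ℕ, ∫ s in Set.Ioc (0:ℝ) t, (t - s) ^ (α - 1) * s ^ (α * k)
      = t ^ (α * k + α) * (Real.Gamma (α * k + 1) * Real.Gamma α / Real.Gamma (α * k + 1 + α)) := by
    intro k
    have hb := beta_real (p := α * k + 1) (q := α) (by positivity) hα htpos
    rw [intervalIntegral.integral_of_le htpos.le] at hb
    simp only [add_sub_cancel_right] at hb
    rw [show α * k + 1 + α - 1 = α * k + α by ring] at hb
    rw [← hb]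
    exact setIntegral_congr_fun measurableSet_Ioc fun s _ => mul_comm _ _
  -- F k agrees a.e. on Ioc with a constant multiple of the base function
  have hae : ∀ k : ℕ, (fun s => (lam ^ k * y0 / Real.Gamma (α * k + 1)) *
        ((t - s) ^ (α - 1) * s ^ (α * k)))
      =ᵐ[volume.restrict (Set.Ioc 0 t)] F k := by
    intro k
    rw [Filter.EventuallyEq, ae_restrict_iff' measurableSet_Ioc]
    filter_upwards with s hs
    rw [hF]
    simp only
    rw [mul_pow, hrp s hs.1.le k]
    ring
  have hFint : ∀ k : ℕ, Integrable (F k) (volume.restrict (Set.Ioc 0 t)) := by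
    intro k
    exact (((hbase k).const_mul _).congr (hae k))
  -- value of the integral of F k
  have hint : ∀ k : ℕ, ∫ s in Set.Ioc (0:ℝ) t, F k s
      = (lam ^ k * y0 / Real.Gamma (α * k + 1)) *
        (t ^ (α * k + α) * (Real.Gamma (α * k + 1) * Real.Gamma α / Real.Gamma (α * k + 1 + α))) := by
    intro k
    rw [← integral_congr_ae (hae k), MeasureTheory.integral_const_mul, hbeta k]
  -- value of the integral of ‖F k‖
  have hnorm : ∀ k : ℕ, ∫ s in Set.Ioc (0:ℝ) t, ‖F k s‖
      = (|lam| ^ k * |y0| / Real.Gamma (α * k + 1)) *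
        (t ^ (α * k + α) * (Real.Gamma (α * k + 1) * Real.Gamma α / Real.Gamma (α * k + 1 + α))) := by
    intro k
    have hGpos : 0 < Real.Gamma (α * k + 1) := Real.Gamma_pos_of_pos (by positivity)
    rw [← hbeta k, ← MeasureTheory.integral_const_mul]
    refine setIntegral_congr_fun measurableSet_Ioc fun s hs => ?_
    rw [hF]
    simp only
    rw [norm_mul, norm_mul, norm_div, norm_pow, norm_mul]
    rw [Real.norm_eq_abs, Real.norm_eq_abs, Real.norm_eq_abs, Real.norm_eq_abs,
      Real.norm_eq_abs]
    rw [abs_of_nonneg (Real.rpow_nonneg (by linarith [hs.2] : (0:ℝ) ≤ t - s) _),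
      abs_of_nonneg (Real.rpow_nonneg hs.1.le α), abs_of_pos hGpos]
    rw [mul_pow, hrp s hs.1.le k]
    ring
  -- summability of the norm integrals
  have hsum : Summable fun k : ℕ => ∫ s in Set.Ioc (0:ℝ) t, ‖F k s‖ := by
    refine Summable.congr ?_ (fun k => (hnorm k).symm)
    have base := (ml_summable hα (by linarith : (1:ℝ) ≤ α + 1) (|lam| * t ^ α)).mul_left
      (|y0| * Real.Gamma α * t ^ α)
    refine base.congr fun k => ?_
    have h1 : (|lam| * t ^ α) ^ k = |lam| ^ k * t ^ (α * k) := by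
      rw [mul_pow, hrp t ht k]
    have h2 : t ^ (α * k + α) = t ^ (α * k) * t ^ α := Real.rpow_add htpos _ _
    have h3 : α * k + (α + 1) = α * k + 1 + α := by ring
    have hGpos : 0 < Real.Gamma (α * k + 1) := Real.Gamma_pos_of_pos (by positivity)
    have hGpos2 : 0 < Real.Gamma (α * k + 1 + α) := Real.Gamma_pos_of_pos (by positivity)
    rw [h1, h3, h2]
    field_simp
  -- interchange sum and integral
  rw [intervalIntegral.integral_of_le htpos.le]
  simp only [hexp]
  rw [← MeasureTheory.integral_tsum_of_summable_integral_norm hFint hsum]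
  -- evaluate the series
  have hS0 : Summable fun k : ℕ => (lam * t ^ α) ^ k / Real.Gamma (α * k + 1) * y0 :=
    (ml_summable hα le_rfl (lam * t ^ α)).mul_right y0
  calc mittagLeffler α (lam * t ^ α) * y0
      = ∑' k : ℕ, (lam * t ^ α) ^ k / Real.Gamma (α * k + 1) * y0 := by
        rw [mittagLeffler, tsum_mul_right]
    _ = ((lam * t ^ α) ^ (0:ℕ) / Real.Gamma (α * (0:ℕ) + 1) * y0)
        + ∑' k : ℕ, (lam * t ^ α) ^ (k + 1) / Real.Gamma (α * (k + 1 : ℕ) + 1) * y0 :=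
        hS0.tsum_eq_zero_add
    _ = y0 + (lam / Real.Gamma α) * ∑' k : ℕ, ∫ s in Set.Ioc (0:ℝ) t, F k s := by
        congr 1
        · norm_num [Real.Gamma_one]
        · rw [← tsum_mul_left]
          refine tsum_congr fun k => ?_
          rw [hint k]
          have hGpos : 0 < Real.Gamma (α * k + 1) := Real.Gamma_pos_of_pos (by positivity)
          have hGpos2 : 0 < Real.Gamma (α * k + 1 + α) := Real.Gamma_pos_of_pos (by positivity)
          have h1 : (lam * t ^ α) ^ (k+1) = lam ^ (k+1) * t ^ (α * ((k:ℝ)+1)) := by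
            rw [mul_pow, hrp t ht (k+1)]
            push_cast
            ring_nf
          have h2 : α * ((k:ℝ) + 1) + 1 = α * k + 1 + α := by ring
          have h3 : α * ((k+1 : ℕ) : ℝ) = α * ((k:ℝ) + 1) := by push_cast; ring
          rw [h1, h3, h2, show α * ((k:ℝ)+1) = α * k + α by ring]
          rw [pow_succ]
          field_simp
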